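/- Let α₀ : ℝ → ℝ be locally Lipschitz, strictly monotonically increasing, and satisfy α₀(0) = 0. Let D : [0,∞) → ℝ be differentiable with D'(t) ≥ -α₀(D(t)) for all t ≥ 0 and D(0) > 0. Then D(t) > 0 for all t ≥ 0; i.e., the set {D > 0} is forward invariant. -/

import Mathlib

open Filter Topology Set

theorem cbf_forward_invariance
    (α₀ : ℝ → ℝ) (hLip : LocallyLipschitz α₀) (hMono : StrictMono α₀)
    (hzero : α₀ 0 = 0)
    (D D' : ℝ → ℝ)
    (hderiv : ∀ t : ℝ, 0 ≤ t → HasDerivAt D (D' t) t)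
    (hineq : ∀ t : ℝ, 0 ≤ t → D' t ≥ -α₀ (D t))
    (hD0 : D 0 > 0) :
    ∀ t : ℝ, 0 ≤ t → D t > 0 := by
  by_contra h
  push_neg at h
  obtain ⟨s, hs0, hsD⟩ := h
  have hcont : ∀ t : ℝ, 0 ≤ t → ContinuousAt D t := fun t ht => (hderiv t ht).continuousAt
  set S : Set ℝ := {t | 0 ≤ t ∧ D t ≤ 0} with hS
  have hSne : S.Nonempty := ⟨s, hs0, hsD⟩
  have hSbdd : BddBelow S := ⟨0, fun x hx => hx.1⟩
  set t₁ : ℝ := sInf S with ht₁def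
  have ht₁0 : 0 ≤ t₁ := le_csInf hSne fun x hx => hx.1
  have hmemcl : t₁ ∈ closure S := csInf_mem_closure hSne hSbdd
  have hDt₁le : D t₁ ≤ 0 := by
    have htd : Filter.Tendsto D (𝓝[S] t₁) (𝓝 (D t₁)) :=
      ((hcont t₁ ht₁0).continuousWithinAt : ContinuousWithinAt D S t₁)
    have hne : (𝓝[S] t₁).NeBot := mem_closure_iff_nhdsWithin_neBot.mp hmemcl
    exact le_of_tendsto htd (eventually_nhdsWithin_of_forall fun x hx => hx.2)
  have hpos : ∀ t : ℝ, 0 ≤ t → t < t₁ → 0 < D t := by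
    intro t ht htlt
    by_contra hc
    push_neg at hc
    exact absurd (csInf_le hSbdd ⟨ht, hc⟩) (not_le.mpr htlt)
  have ht₁pos : 0 < t₁ := by
    rcases lt_or_eq_of_le ht₁0 with h | h
    · exact h
    · exact absurd hDt₁le (not_le.mpr (h ▸ hD0))
  have hDt₁ge : 0 ≤ D t₁ := by
    have htd : Filter.Tendsto D (𝓝[<] t₁) (𝓝 (D t₁)) :=
      ((hcont t₁ ht₁0).continuousWithinAt : ContinuousWithinAt D (Iio t₁) t₁)
    refine ge_of_tendsto htd ?_
    filter_upwards [Ioo_mem_nhdsLT_of_mem (Set.mem_Ioc.mpr ⟨ht₁pos, le_refl t₁⟩)] with x hx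
    exact (hpos x hx.1.le hx.2).le
  have hDt₁ : D t₁ = 0 := le_antisymm hDt₁le hDt₁ge
  -- local Lipschitz bound near 0
  obtain ⟨K, U, hU, hKlip⟩ := hLip 0
  obtain ⟨ε, hε, hball⟩ := Metric.mem_nhds_iff.mp hU
  have hαbound : ∀ y : ℝ, 0 ≤ y → y < ε → α₀ y ≤ K * y := by
    intro y hy hyε
    have hymem : y ∈ U := hball (by simpa [Real.norm_eq_abs, abs_of_nonneg hy] using
      (show dist y 0 < ε by simpa [Real.dist_eq, abs_of_nonneg hy] using hyε))
    have h0mem : U ∈ 𝓝 0 := hU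
    have h0' : (0:ℝ) ∈ U := hball (Metric.mem_ball_self hε)
    have := hKlip.dist_le_mul y hymem 0 h0'
    rw [hzero, Real.dist_eq, Real.dist_eq, sub_zero, sub_zero, abs_of_nonneg hy] at this
    exact (le_abs_self _).trans this
  -- find t₀ close to t₁
  obtain ⟨δ, hδ, hδcont⟩ := Metric.continuousAt_iff.mp (hcont t₁ ht₁0) ε hε
  set t₀ : ℝ := max (t₁ - δ/2) (t₁/2) with ht₀def
  have ht₀pos : 0 < t₀ := lt_max_of_lt_right (by linarith)
  have ht₀lt : t₀ < t₁ := max_lt (by linarith) (by linarith)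
  have hDsmall : ∀ t ∈ Icc t₀ t₁, 0 ≤ D t ∧ D t < ε := by
    intro t ht
    have ht0 : 0 ≤ t := le_trans ht₀pos.le ht.1
    have hd : dist t t₁ < δ := by
      rw [Real.dist_eq, abs_of_nonpos (by linarith [ht.2])]
      have : t₁ - δ/2 ≤ t₀ := le_max_left _ _
      linarith [ht.1]
    have hclose := hδcont hd
    rw [Real.dist_eq, hDt₁, sub_zero] at hclose
    have hge : 0 ≤ D t := by
      rcases lt_or_eq_of_le ht.2 with h | h
      · exact (hpos t ht0 h).le
      · rw [h, hDt₁]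
    exact ⟨hge, (abs_of_nonneg hge ▸ hclose : D t < ε)⟩
  -- g t = D t * exp (K t) is monotone on [t₀, t₁]
  set g : ℝ → ℝ := fun t => D t * Real.exp (K * t) with hg
  set g' : ℝ → ℝ := fun t => (D' t + K * D t) * Real.exp (K * t) with hg'
  have hgd : ∀ x : ℝ, 0 ≤ x → HasDerivAt g (g' x) x := by
    intro x hx
    have hexp : HasDerivAt (fun t : ℝ => Real.exp (K * t)) (K * Real.exp (K * x)) x := by
      have h1 : HasDerivAt (fun t : ℝ => (K:ℝ) * t) (K:ℝ) x := by
        simpa using (hasDerivAt_id x).const_mul (K:ℝ)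
      simpa [mul_comm] using h1.exp
    have : HasDerivAt g _ x := (hderiv x hx).mul hexp
    convert this using 1
    show (D' x + K * D x) * Real.exp (K * x) = _
    ring
  have hmono : MonotoneOn g (Icc t₀ t₁) := by
    have hconv : Convex ℝ (Icc t₀ t₁) := convex_Icc _ _
    have hint : interior (Icc t₀ t₁) = Ioo t₀ t₁ := interior_Icc
    apply monotoneOn_of_hasDerivWithinAt_nonneg hconv (f' := g')
    · intro x hx
      exact (hgd x (le_trans ht₀pos.le hx.1)).continuousAt.continuousWithinAt
    · intro x hx
      rw [hint] at hx
      exact (hgd x (le_trans ht₀pos.le hx.1.le)).hasDerivWithinAt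
    · intro x hx
      rw [hint] at hx
      have hx0 : 0 ≤ x := le_trans ht₀pos.le hx.1.le
      obtain ⟨hDge, hDlt⟩ := hDsmall x ⟨hx.1.le, hx.2.le⟩
      have h1 : -α₀ (D x) ≥ -(K * D x) := neg_le_neg (hαbound (D x) hDge hDlt)
      have h2 : D' x + K * D x ≥ 0 := by
        have := hineq x hx0
        linarith
      exact mul_nonneg h2 (Real.exp_pos _).le
  have hle : g t₀ ≤ g t₁ :=
    hmono (Set.left_mem_Icc.mpr ht₀lt.le) (Set.right_mem_Icc.mpr ht₀lt.le) ht₀lt.le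
  have hgt₁ : g t₁ = 0 := by simp [hg, hDt₁]
  have hgt₀ : 0 < g t₀ :=
    mul_pos (hpos t₀ ht₀pos.le ht₀lt) (Real.exp_pos _)
  linarith [hgt₁ ▸ hle]
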